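/- arXiv:0906.5050 — 2 statements merged into one kernel-verified Lean document; each statement's English description precedes it below -/
import Mathlib

section
/- Suppose N items with nonnegative sizes b₁ ≥ b₂ ≥ ... ≥ b_N are distributed to X bins in round-robin fashion. For every bin j, after removing the largest item assigned to bin j (i.e., item b_j, the first item it received), the total size of the remaining items in bin j is at most (1/X)·∑_{i=1}^{N} b_i. -/
open scoped Classical

theorem stmt3 (N X j : ℕ) (hX : 0 < X) (hj : 1 ≤ j) (hjX : j ≤ X) (b : ℕ → ℝ)
    (hnn : ∀ i, 0 ≤ b i) (hmono : ∀ i i', 1 ≤ i → i ≤ i' → i' ≤ N → b i' ≤ b i) :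
    ∑ i ∈ (Finset.Icc 1 N).filter (fun i => ∃ p : ℕ, 1 ≤ p ∧ i = j + p * X), b i
      ≤ (1/(X:ℝ)) * ∑ i ∈ Finset.Icc 1 N, b i := by
  set S := (Finset.Icc 1 N).filter (fun i => ∃ p : ℕ, 1 ≤ p ∧ i = j + p * X) with hS
  rw [one_div, inv_mul_eq_div, le_div_iff₀ (by exact_mod_cast hX)]
  have hmem : ∀ i ∈ S, X ≤ i ∧ i ≤ N := by
    intro i hi
    simp only [hS, Finset.mem_filter, Finset.mem_Icc] at hi
    obtain ⟨⟨_, hiN⟩, p, hp, rfl⟩ := hi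
    refine ⟨?_, hiN⟩
    calc X ≤ p * X := Nat.le_mul_of_pos_left X hp
      _ ≤ j + p * X := Nat.le_add_left _ _
  have key : ∀ i ∈ S, (X:ℝ) * b i ≤ ∑ k ∈ Finset.Ioc (i - X) i, b k := by
    intro i hi
    obtain ⟨hXi, hiN⟩ := hmem i hi
    have hcard : (Finset.Ioc (i - X) i).card = X := by
      rw [Nat.card_Ioc]; omega
    calc (X:ℝ) * b i = ∑ _k ∈ Finset.Ioc (i - X) i, b i := by
          rw [Finset.sum_const, hcard, nsmul_eq_mul]
      _ ≤ ∑ k ∈ Finset.Ioc (i - X) i, b k := by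
          apply Finset.sum_le_sum
          intro k hk
          rw [Finset.mem_Ioc] at hk
          exact hmono k i (by omega) hk.2 hiN
  calc (∑ i ∈ S, b i) * X = ∑ i ∈ S, (X:ℝ) * b i := by
        rw [Finset.sum_mul]; exact Finset.sum_congr rfl (fun i _ => by ring)
    _ ≤ ∑ i ∈ S, ∑ k ∈ Finset.Ioc (i - X) i, b k := Finset.sum_le_sum key
    _ = ∑ k ∈ S.biUnion (fun i => Finset.Ioc (i - X) i), b k := by
        rw [Finset.sum_biUnion]
        intro i hi i' hi' hne
        simp only [hS, Finset.mem_coe, Finset.mem_filter] at hi hi'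
        obtain ⟨-, p, hp, rfl⟩ := hi
        obtain ⟨-, p', hp', rfl⟩ := hi'
        have hpp : p ≠ p' := by rintro rfl; exact hne rfl
        apply Finset.disjoint_left.mpr
        intro k hk hk'
        rw [Finset.mem_Ioc] at hk hk'
        rcases lt_or_gt_of_ne hpp with h | h
        · have : p * X + X ≤ p' * X := by nlinarith
          omega
        · have : p' * X + X ≤ p * X := by nlinarith
          omega
    _ ≤ ∑ k ∈ Finset.Icc 1 N, b k := by
        apply Finset.sum_le_sum_of_subset_of_nonneg
        · intro k hk
          rw [Finset.mem_biUnion] at hk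
          obtain ⟨i, hi, hk⟩ := hk
          obtain ⟨hXi, hiN⟩ := hmem i hi
          rw [Finset.mem_Ioc] at hk
          rw [Finset.mem_Icc]
          omega
        · intros; exact hnn _
end

section
/- Let W' ⊆ W be window values, and suppose a nonnegative solution (x, Y) satisfies, for each window w', the constraint w'·∑_{C̃∈C(w')} x_{C̃} ≥ ∑_i s_i·Y_{i,w'}. If for every generalized configuration (C, w') with w' ∉ W' and x_{(C,w')} > 0, the main window w of C satisfies w ≥ w', and we transfer: increase x_{(C,w)} by x_{(C,w')}, set x_{(C,w')} = 0, and move (x_{(C,w')}/X_{w'})·Y_{i,w'} from Y_{i,w'} to Y_{i,w} for each item i (where X_{w'} = ∑_{C̃∈C(w')} x_{C̃}), then the resulting solution still satisfies all size constraints w·∑_{C̃∈C(w)} x_{C̃} ≥ ∑_i s_i·Y_{i,w} for every window w ∈ W', the sum ∑ x is unchanged, and for every item i the sum ∑_w Y_{i,w} is unchanged. -/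
theorem stmt16 (ι Conf : Type) [Fintype ι] [Fintype Conf]
    (s : ι → ℝ) (hs : ∀ i, 0 ≤ s i)
    (W W' : Finset ℝ) (hW' : W' ⊆ W) (hWpos : ∀ w ∈ W, 0 < w)
    (wmain : Conf → ℝ) (hwmain : ∀ C, wmain C ∈ W')
    (x : Conf → ℝ → ℝ) (Y : ι → ℝ → ℝ)
    (hxnn : ∀ C w, 0 ≤ x C w) (hYnn : ∀ i w, 0 ≤ Y i w)
    (hcons : ∀ w ∈ W, ∑ i, s i * Y i w ≤ w * ∑ C, x C w)
    (hmain : ∀ C : Conf, ∀ w' ∈ W, w' ∉ W' → x C w' ≠ 0 → w' ≤ wmain C)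
    (hpos : ∀ w' ∈ W, w' ∉ W' → (∑ C, x C w') ≠ 0 ∨ ∀ i, Y i w' = 0)
    (x' : Conf → ℝ → ℝ) (Y' : ι → ℝ → ℝ)
    (hx' : ∀ C, ∀ w ∈ W', x' C w =
        x C w + (if wmain C = w then ∑ w'' ∈ W \ W', x C w'' else 0))
    (hx'0 : ∀ C, ∀ w ∈ W \ W', x' C w = 0)
    (hY' : ∀ i, ∀ w ∈ W', Y' i w = Y i w + ∑ w'' ∈ W \ W',
        ((∑ C, if wmain C = w then x C w'' else 0) / (∑ C, x C w'')) * Y i w'')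
    (hY'0 : ∀ i, ∀ w ∈ W \ W', Y' i w = 0) :
    (∀ w ∈ W', ∑ i, s i * Y' i w ≤ w * ∑ C, x' C w) ∧
    (∑ w ∈ W, ∑ C, x' C w = ∑ w ∈ W, ∑ C, x C w) ∧
    (∀ i, ∑ w ∈ W, Y' i w = ∑ w ∈ W, Y i w) := by
  have hNnn : ∀ (w w'' : ℝ), 0 ≤ ∑ C, (if wmain C = w then x C w'' else 0) := by
    intro w w''
    refine Finset.sum_nonneg fun C _ => ?_
    split_ifs
    · exact hxnn C w''
    · exact le_rfl
  have hDnn : ∀ (w'' : ℝ), 0 ≤ ∑ C, x C w'' := fun w'' =>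
    Finset.sum_nonneg fun C _ => hxnn C w''
  -- sum over W' of the "indicator" sums gives the full sum
  have hNsum : ∀ (w'' : ℝ),
      ∑ w ∈ W', ∑ C, (if wmain C = w then x C w'' else 0) = ∑ C, x C w'' := by
    intro w''
    rw [Finset.sum_comm]
    refine Finset.sum_congr rfl fun C _ => ?_
    rw [Finset.sum_ite_eq]
    simp [hwmain C]
  refine ⟨?_, ?_, ?_⟩
  · -- size constraints
    intro w hw
    have hwW := hW' hw
    have key : ∀ w'' ∈ W \ W',
        ((∑ C, if wmain C = w then x C w'' else 0) / (∑ C, x C w'')) *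
          (∑ i, s i * Y i w'')
          ≤ w * (∑ C, if wmain C = w then x C w'' else 0) := by
      intro w'' hw''
      rw [Finset.mem_sdiff] at hw''
      obtain ⟨hw''W, hw''nW⟩ := hw''
      by_cases hD : (∑ C, x C w'') = 0
      · have hY0 : ∀ i, Y i w'' = 0 :=
          (hpos w'' hw''W hw''nW).resolve_left (not_not.mpr hD)
        have h0 : (∑ i, s i * Y i w'') = 0 := by simp [hY0]
        rw [h0, mul_zero]
        exact mul_nonneg (hWpos w hwW).le (hNnn w w'')
      · have hDpos : 0 < ∑ C, x C w'' := lt_of_le_of_ne (hDnn w'') (Ne.symm hD)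
        rcases eq_or_lt_of_le (hNnn w w'') with hN0 | hNpos
        · rw [← hN0]
          simp
        · have hNne : (∑ C, if wmain C = w then x C w'' else 0) ≠ 0 := ne_of_gt hNpos
          obtain ⟨C0, -, hC0⟩ := Finset.exists_ne_zero_of_sum_ne_zero hNne
          have hm : wmain C0 = w := by
            by_contra h
            simp [h] at hC0
          have hx0 : x C0 w'' ≠ 0 := by simpa [hm] using hC0
          have hle : w'' ≤ w := hm ▸ hmain C0 w'' hw''W hw''nW hx0
          calc ((∑ C, if wmain C = w then x C w'' else 0) / (∑ C, x C w'')) *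
                (∑ i, s i * Y i w'')
              ≤ ((∑ C, if wmain C = w then x C w'' else 0) / (∑ C, x C w'')) *
                (w'' * ∑ C, x C w'') :=
                mul_le_mul_of_nonneg_left (hcons w'' hw''W)
                  (div_nonneg (hNnn w w'') hDpos.le)
            _ = w'' * (∑ C, if wmain C = w then x C w'' else 0) := by
                field_simp
            _ ≤ w * (∑ C, if wmain C = w then x C w'' else 0) :=
                mul_le_mul_of_nonneg_right hle (hNnn w w'')
    have hL : ∑ i, s i * Y' i w = (∑ i, s i * Y i w)
        + ∑ w'' ∈ W \ W',
            ((∑ C, if wmain C = w then x C w'' else 0) / (∑ C, x C w'')) *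
              (∑ i, s i * Y i w'') := by
      rw [Finset.sum_congr rfl fun i _ => by rw [hY' i w hw]]
      simp only [mul_add]
      rw [Finset.sum_add_distrib]
      congr 1
      simp only [Finset.mul_sum]
      rw [Finset.sum_comm]
      refine Finset.sum_congr rfl fun w'' _ => ?_
      refine Finset.sum_congr rfl fun i _ => ?_
      ring
    have hR : (w : ℝ) * ∑ C, x' C w = w * (∑ C, x C w)
        + ∑ w'' ∈ W \ W', w * (∑ C, if wmain C = w then x C w'' else 0) := by
      rw [Finset.sum_congr rfl fun C _ => hx' C w hw, Finset.sum_add_distrib]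
      rw [mul_add]
      congr 1
      rw [← Finset.mul_sum]
      congr 1
      rw [Finset.sum_comm]
      refine Finset.sum_congr rfl fun C _ => ?_
      split_ifs <;> simp
    rw [hL, hR]
    exact add_le_add (hcons w hwW) (Finset.sum_le_sum key)
  · -- total x unchanged
    rw [← Finset.sum_sdiff hW' (f := fun w => ∑ C, x' C w),
        ← Finset.sum_sdiff hW' (f := fun w => ∑ C, x C w)]
    have h0 : ∑ w ∈ W \ W', ∑ C, x' C w = 0 :=
      Finset.sum_eq_zero fun w hw => Finset.sum_eq_zero fun C _ => hx'0 C w hw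
    rw [h0, zero_add]
    have e1 : ∑ w ∈ W', ∑ C, x' C w
        = (∑ w ∈ W', ∑ C, x C w)
          + ∑ w ∈ W', ∑ C, (if wmain C = w then ∑ w'' ∈ W \ W', x C w'' else 0) := by
      rw [← Finset.sum_add_distrib]
      refine Finset.sum_congr rfl fun w hw => ?_
      rw [Finset.sum_congr rfl fun C _ => hx' C w hw, Finset.sum_add_distrib]
    have e2 : ∑ w ∈ W', ∑ C, (if wmain C = w then ∑ w'' ∈ W \ W', x C w'' else 0)
        = ∑ w'' ∈ W \ W', ∑ C, x C w'' := by
      have : ∀ w, ∑ C, (if wmain C = w then ∑ w'' ∈ W \ W', x C w'' else 0)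
          = ∑ w'' ∈ W \ W', ∑ C, (if wmain C = w then x C w'' else 0) := by
        intro w
        rw [Finset.sum_comm]
        refine Finset.sum_congr rfl fun C _ => ?_
        split_ifs <;> simp
      rw [Finset.sum_congr rfl fun w _ => this w, Finset.sum_comm]
      exact Finset.sum_congr rfl fun w'' _ => hNsum w''
    rw [e1, e2]
    ring
  · -- total Y unchanged
    intro i
    rw [← Finset.sum_sdiff hW' (f := fun w => Y' i w),
        ← Finset.sum_sdiff hW' (f := fun w => Y i w)]
    have h0 : ∑ w ∈ W \ W', Y' i w = 0 :=
      Finset.sum_eq_zero fun w hw => hY'0 i w hw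
    rw [h0, zero_add]
    have e1 : ∑ w ∈ W', Y' i w
        = (∑ w ∈ W', Y i w)
          + ∑ w ∈ W', ∑ w'' ∈ W \ W',
              ((∑ C, if wmain C = w then x C w'' else 0) / (∑ C, x C w'')) * Y i w'' := by
      rw [← Finset.sum_add_distrib]
      exact Finset.sum_congr rfl fun w hw => hY' i w hw
    have e2 : ∑ w ∈ W', ∑ w'' ∈ W \ W',
        ((∑ C, if wmain C = w then x C w'' else 0) / (∑ C, x C w'')) * Y i w''
        = ∑ w'' ∈ W \ W', Y i w'' := by
      rw [Finset.sum_comm]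
      refine Finset.sum_congr rfl fun w'' hw'' => ?_
      rw [Finset.mem_sdiff] at hw''
      obtain ⟨hw''W, hw''nW⟩ := hw''
      have : ∑ w ∈ W',
          ((∑ C, if wmain C = w then x C w'' else 0) / (∑ C, x C w'')) * Y i w''
          = ((∑ C, x C w'') / (∑ C, x C w'')) * Y i w'' := by
        rw [← Finset.sum_mul, ← Finset.sum_div, hNsum w'']
      rw [this]
      by_cases hD : (∑ C, x C w'') = 0
      · have hY0 : ∀ j, Y j w'' = 0 :=
          (hpos w'' hw''W hw''nW).resolve_left (not_not.mpr hD)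
        simp [hY0]
      · rw [div_self hD, one_mul]
    rw [e1, e2]
    ring
end
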